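/- Let A : ℝ^n → ℝ^m be linear, 0 < τ ≤ 1/‖AᵀA‖, D : ℝ^n → ℝ^n nonexpansive, δ² > 1, and suppose T_δ = D_δ ∘ G has a fixed point, where D_δ = Id + (D − Id)/δ² and G(x) = x − τ·Aᵀ(Ax − y). Then for any x⁰, the PnP-PGD iterates x^{k+1} = T_δ(x^k) converge to a fixed point of T_δ. -/

import Mathlib

open Filter Topology

section Aux

variable {E : Type*} [NormedAddCommGroup E] [InnerProductSpace ℝ E]

/-- The key inequality satisfied by an `α`-averaged operator. -/
lemma avg_ineq (S : E → E) (hS : ∀ x y, ‖S x - S y‖ ≤ ‖x - y‖)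
    (α : ℝ) (hα0 : 0 < α) (hα1 : α < 1) (T : E → E)
    (hT : ∀ x, T x = x + α • (S x - x)) (x z : E) :
    ‖T x - T z‖ ^ 2 + ((1 - α) / α) * ‖(x - T x) - (z - T z)‖ ^ 2 ≤ ‖x - z‖ ^ 2 := by
  set u := x - z with hu
  set v := S x - S z with hv
  have h1 : T x - T z = (1 - α) • u + α • v := by
    rw [hT, hT]; simp only [hu, hv]; module
  have h2 : (x - T x) - (z - T z) = α • (u - v) := by
    rw [hT, hT]; simp only [hu, hv]; module
  have e1 : ‖T x - T z‖ ^ 2 =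
      (1 - α) ^ 2 * ‖u‖ ^ 2 + 2 * ((1 - α) * α) * inner ℝ u v + α ^ 2 * ‖v‖ ^ 2 := by
    rw [h1, norm_add_sq_real, norm_smul, norm_smul, real_inner_smul_left,
      real_inner_smul_right]
    have : |1 - α| = 1 - α := abs_of_nonneg (by linarith)
    simp [Real.norm_eq_abs, this, abs_of_pos hα0]
    ring
  have e2 : ‖(x - T x) - (z - T z)‖ ^ 2 = α ^ 2 * (‖u‖ ^ 2 - 2 * inner ℝ u v + ‖v‖ ^ 2) := by
    rw [h2, norm_smul]
    rw [Real.norm_eq_abs, mul_pow, sq_abs, norm_sub_sq_real]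
  have hvu : ‖v‖ ^ 2 ≤ ‖u‖ ^ 2 := by
    have := hS x z
    nlinarith [norm_nonneg v, norm_nonneg u]
  rw [e1, e2]
  have hα0' : α ≠ 0 := ne_of_gt hα0
  have : (1 - α) / α * (α ^ 2 * (‖u‖ ^ 2 - 2 * inner ℝ u v + ‖v‖ ^ 2)) =
      (1 - α) * α * (‖u‖ ^ 2 - 2 * inner ℝ u v + ‖v‖ ^ 2) := by
    field_simp
  rw [this]
  nlinarith [hvu]

/-- Composition of two operators satisfying the averaged inequality. -/
lemma comp_ineq (T₁ T₂ : E → E) (c₁ c₂ : ℝ) (hc₁ : 0 < c₁) (hc₂ : 0 < c₂)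
    (h₁ : ∀ x z, ‖T₁ x - T₁ z‖ ^ 2 + c₁ * ‖(x - T₁ x) - (z - T₁ z)‖ ^ 2 ≤ ‖x - z‖ ^ 2)
    (h₂ : ∀ x z, ‖T₂ x - T₂ z‖ ^ 2 + c₂ * ‖(x - T₂ x) - (z - T₂ z)‖ ^ 2 ≤ ‖x - z‖ ^ 2)
    (x z : E) :
    ‖(T₂ ∘ T₁) x - (T₂ ∘ T₁) z‖ ^ 2 +
      (min c₁ c₂ / 2) * ‖(x - (T₂ ∘ T₁) x) - (z - (T₂ ∘ T₁) z)‖ ^ 2 ≤ ‖x - z‖ ^ 2 := by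
  have hA := h₁ x z
  have hB := h₂ (T₁ x) (T₁ z)
  set a := (x - T₁ x) - (z - T₁ z) with ha
  set b := (T₁ x - T₂ (T₁ x)) - (T₁ z - T₂ (T₁ z)) with hb
  have hab : (x - (T₂ ∘ T₁) x) - (z - (T₂ ∘ T₁) z) = a + b := by
    simp only [ha, hb, Function.comp_apply]; abel
  have htri : ‖a + b‖ ^ 2 ≤ 2 * ‖a‖ ^ 2 + 2 * ‖b‖ ^ 2 := by
    have := norm_add_le a b
    nlinarith [norm_nonneg a, norm_nonneg b, norm_nonneg (a + b), sq_nonneg (‖a‖ - ‖b‖)]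
  have hmin1 : min c₁ c₂ ≤ c₁ := min_le_left _ _
  have hmin2 : min c₁ c₂ ≤ c₂ := min_le_right _ _
  have hna : 0 ≤ ‖a‖ ^ 2 := sq_nonneg _
  have hnb : 0 ≤ ‖b‖ ^ 2 := sq_nonneg _
  rw [hab]
  simp only [Function.comp_apply] at *
  have hminpos : 0 < min c₁ c₂ := lt_min hc₁ hc₂
  have h3 : (min c₁ c₂ / 2) * ‖a + b‖ ^ 2 ≤ c₁ * ‖a‖ ^ 2 + c₂ * ‖b‖ ^ 2 := by
    calc (min c₁ c₂ / 2) * ‖a + b‖ ^ 2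
        ≤ (min c₁ c₂ / 2) * (2 * ‖a‖ ^ 2 + 2 * ‖b‖ ^ 2) := by
          apply mul_le_mul_of_nonneg_left htri (by positivity)
      _ = min c₁ c₂ * ‖a‖ ^ 2 + min c₁ c₂ * ‖b‖ ^ 2 := by ring
      _ ≤ c₁ * ‖a‖ ^ 2 + c₂ * ‖b‖ ^ 2 := by
          gcongr
  linarith

end Aux

/-- Krasnoselskii–Mann-type convergence in a finite-dimensional Euclidean space for
operators satisfying the averaged inequality. -/
lemma km_conv {n : ℕ} (T : EuclideanSpace ℝ (Fin n) → EuclideanSpace ℝ (Fin n))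
    (c : ℝ) (hc : 0 < c)
    (hineq : ∀ x z, ‖T x - T z‖ ^ 2 + c * ‖(x - T x) - (z - T z)‖ ^ 2 ≤ ‖x - z‖ ^ 2)
    (p0 : EuclideanSpace ℝ (Fin n)) (hp0 : T p0 = p0)
    (x₀ : EuclideanSpace ℝ (Fin n)) :
    ∃ p, T p = p ∧ Tendsto (fun k => T^[k] x₀) atTop (𝓝 p) := by
  -- nonexpansiveness
  have hne : ∀ x z, ‖T x - T z‖ ≤ ‖x - z‖ := by
    intro x z
    have := hineq x z
    nlinarith [norm_nonneg (T x - T z), norm_nonneg (x - z), sq_nonneg (‖(x - T x) - (z - T z)‖),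
      mul_nonneg hc.le (sq_nonneg (‖(x - T x) - (z - T z)‖))]
  set x : ℕ → EuclideanSpace ℝ (Fin n) := fun k => T^[k] x₀ with hx
  have hxsucc : ∀ k, x (k + 1) = T (x k) := by
    intro k; simp [hx, Function.iterate_succ_apply']
  -- key single-step inequality against a fixed point
  have hstep : ∀ (q : EuclideanSpace ℝ (Fin n)), T q = q → ∀ k,
      ‖x (k + 1) - q‖ ^ 2 + c * ‖x k - x (k + 1)‖ ^ 2 ≤ ‖x k - q‖ ^ 2 := by
    intro q hq k
    have := hineq (x k) q
    rw [hq, hxsucc k] at *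
    have hrw : (x k - T (x k)) - (q - q) = x k - T (x k) := by abel
    rw [hrw] at this
    exact this
  have hmono : ∀ (q : EuclideanSpace ℝ (Fin n)), T q = q → ∀ k,
      ‖x (k + 1) - q‖ ≤ ‖x k - q‖ := by
    intro q hq k
    have := hstep q hq k
    nlinarith [norm_nonneg (x (k + 1) - q), norm_nonneg (x k - q), sq_nonneg (‖x k - x (k + 1)‖),
      mul_nonneg hc.le (sq_nonneg (‖x k - x (k + 1)‖))]
  have hanti : ∀ (q : EuclideanSpace ℝ (Fin n)), T q = q →
      Antitone (fun k => ‖x k - q‖) := by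
    intro q hq
    exact antitone_nat_of_succ_le (fun k => hmono q hq k)
  -- boundedness
  have hbd : ∀ k, ‖x k - p0‖ ≤ ‖x₀ - p0‖ := by
    intro k
    have := hanti p0 hp0 (Nat.zero_le k)
    simpa [hx] using this
  -- summability of residuals
  have hsum : ∀ N, ∑ k ∈ Finset.range N, c * ‖x k - x (k + 1)‖ ^ 2 ≤ ‖x₀ - p0‖ ^ 2 := by
    intro N
    have key : ∀ N, ∑ k ∈ Finset.range N, c * ‖x k - x (k + 1)‖ ^ 2
        ≤ ‖x 0 - p0‖ ^ 2 - ‖x N - p0‖ ^ 2 := by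
      intro N
      induction N with
      | zero => simp
      | succ N ih =>
        rw [Finset.sum_range_succ]
        have := hstep p0 hp0 N
        linarith
    have := key N
    have h0 : x 0 = x₀ := by simp [hx]
    rw [h0] at this
    nlinarith [sq_nonneg (‖x N - p0‖)]
  have hsummable : Summable (fun k => c * ‖x k - x (k + 1)‖ ^ 2) :=
    summable_of_sum_range_le (fun k => mul_nonneg hc.le (sq_nonneg _)) hsum
  have hres2 : Tendsto (fun k => c * ‖x k - x (k + 1)‖ ^ 2) atTop (𝓝 0) :=
    hsummable.tendsto_atTop_zero
  have hressq : Tendsto (fun k => ‖x k - x (k + 1)‖ ^ 2) atTop (𝓝 0) := by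
    have := hres2.const_mul (c⁻¹)
    simpa [inv_mul_cancel_left₀ (ne_of_gt hc)] using this
  have hres : Tendsto (fun k => ‖x k - x (k + 1)‖) atTop (𝓝 0) := by
    have hsqrt : Tendsto (fun k => Real.sqrt (‖x k - x (k + 1)‖ ^ 2)) atTop (𝓝 (Real.sqrt 0)) :=
      (Real.continuous_sqrt.tendsto 0).comp hressq
    simpa [Real.sqrt_sq (norm_nonneg _)] using hsqrt
  -- compactness: convergent subsequence
  have hmem : ∀ k, x k ∈ Metric.closedBall p0 (‖x₀ - p0‖) := by
    intro k
    rw [Metric.mem_closedBall, dist_eq_norm]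
    exact hbd k
  obtain ⟨q, _, φ, hφ, hconv⟩ :=
    (isCompact_closedBall p0 (‖x₀ - p0‖)).tendsto_subseq hmem
  -- T is continuous
  have hTcont : Continuous T := by
    have : LipschitzWith 1 T := by
      apply LipschitzWith.of_dist_le_mul
      intro a b
      simpa [dist_eq_norm] using hne a b
    exact this.continuous
  -- q is a fixed point
  have hq : T q = q := by
    have h1 : Tendsto (fun j => x (φ j) - T (x (φ j))) atTop (𝓝 (q - T q)) :=
      hconv.sub ((hTcont.tendsto q).comp hconv)
    have h2 : Tendsto (fun j => x (φ j) - T (x (φ j))) atTop (𝓝 0) := by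
      rw [tendsto_zero_iff_norm_tendsto_zero]
      have : Tendsto (fun j => ‖x (φ j) - x (φ j + 1)‖) atTop (𝓝 0) :=
        hres.comp hφ.tendsto_atTop
      simpa [hxsucc] using this
    have := tendsto_nhds_unique h1 h2
    have : q - T q = 0 := this
    have := sub_eq_zero.mp this
    exact this.symm
  -- whole sequence converges to q
  refine ⟨q, hq, ?_⟩
  have hantiq : Antitone (fun k => ‖x k - q‖) := hanti q hq
  have hbdd : BddBelow (Set.range (fun k => ‖x k - q‖)) :=
    ⟨0, fun r ⟨k, hk⟩ => hk ▸ norm_nonneg _⟩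
  have hlim : Tendsto (fun k => ‖x k - q‖) atTop (𝓝 (⨅ k, ‖x k - q‖)) :=
    tendsto_atTop_ciInf hantiq hbdd
  have hsub : Tendsto (fun j => ‖x (φ j) - q‖) atTop (𝓝 (⨅ k, ‖x k - q‖)) :=
    hlim.comp hφ.tendsto_atTop
  have hsub0 : Tendsto (fun j => ‖x (φ j) - q‖) atTop (𝓝 0) := by
    rw [← tendsto_zero_iff_norm_tendsto_zero]
    exact (tendsto_sub_nhds_zero_iff.mpr hconv)
  have hinf0 : (⨅ k, ‖x k - q‖) = 0 := tendsto_nhds_unique hsub hsub0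
  rw [hinf0] at hlim
  exact tendsto_iff_norm_sub_tendsto_zero.mpr hlim

set_option maxHeartbeats 1000000 in
/-- Convergence of the PnP-PGD iterations: with `0 < τ ≤ 1/‖AᵀA‖`, `D` nonexpansive,
`δ² > 1`, `D_δ = Id + (D − Id)/δ²`, `G(x) = x − τ·Aᵀ(Ax − y)` and `T_δ = D_δ ∘ G`
possessing a fixed point, the iterates `x^{k+1} = T_δ(x^k)` converge to a fixed
point of `T_δ` from any initialisation. -/
theorem pnp_pgd_convergence
    (n m : ℕ) (A : EuclideanSpace ℝ (Fin n) →L[ℝ] EuclideanSpace ℝ (Fin m))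
    (y : EuclideanSpace ℝ (Fin m)) (τ : ℝ)
    (hτ₀ : 0 < τ) (hτ : τ ≤ 1 / ‖(ContinuousLinearMap.adjoint A).comp A‖)
    (D : EuclideanSpace ℝ (Fin n) → EuclideanSpace ℝ (Fin n))
    (hD : LipschitzWith 1 D)
    (δ : ℝ) (hδ : 1 < δ ^ 2)
    (Dδ G Tδ : EuclideanSpace ℝ (Fin n) → EuclideanSpace ℝ (Fin n))
    (hDδ : ∀ x, Dδ x = x + (δ ^ 2)⁻¹ • (D x - x))
    (hG : ∀ x, G x = x - τ • (ContinuousLinearMap.adjoint A) (A x - y))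
    (hT : Tδ = Dδ ∘ G)
    (hfix : ∃ x, Tδ x = x)
    (x₀ : EuclideanSpace ℝ (Fin n)) :
    ∃ p, Tδ p = p ∧ Tendsto (fun k => Tδ^[k] x₀) atTop (𝓝 p) := by
  classical
  set B : EuclideanSpace ℝ (Fin n) →L[ℝ] EuclideanSpace ℝ (Fin n) :=
    (ContinuousLinearMap.adjoint A).comp A with hB
  -- the reflected gradient map
  set S₁ : EuclideanSpace ℝ (Fin n) → EuclideanSpace ℝ (Fin n) :=
    fun x => x - (2 * τ) • ((ContinuousLinearMap.adjoint A) (A x - y)) with hS₁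
  -- difference formula
  have hdiff : ∀ x z, S₁ x - S₁ z = (x - z) - (2 * τ) • (B (x - z)) := by
    intro x z
    have h1 : (ContinuousLinearMap.adjoint A) (A x - y)
        - (ContinuousLinearMap.adjoint A) (A z - y) = B (x - z) := by
      rw [← map_sub, show (A x - y) - (A z - y) = A x - A z from by abel]
      simp [hB, map_sub]
    simp only [hS₁]
    rw [← h1, smul_sub]
    abel
  -- norm of adjoint
  have hadj_norm : ‖ContinuousLinearMap.adjoint A‖ = ‖A‖ :=
    LinearIsometryEquiv.norm_map ContinuousLinearMap.adjoint A
  -- key cocoercivity-type estimate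
  have hkey : ∀ u : EuclideanSpace ℝ (Fin n), ‖u - (2 * τ) • (B u)‖ ≤ ‖u‖ := by
    intro u
    have hinner : inner ℝ u (B u) = ‖A u‖ ^ 2 := by
      rw [real_inner_comm]
      simp only [hB, ContinuousLinearMap.comp_apply]
      rw [ContinuousLinearMap.adjoint_inner_left]
      exact real_inner_self_eq_norm_sq (A u)
    have hBu : ‖B u‖ ≤ ‖A‖ * ‖A u‖ := by
      simp only [hB, ContinuousLinearMap.comp_apply]
      calc ‖(ContinuousLinearMap.adjoint A) (A u)‖
          ≤ ‖ContinuousLinearMap.adjoint A‖ * ‖A u‖ :=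
            ContinuousLinearMap.le_opNorm _ _
        _ = ‖A‖ * ‖A u‖ := by rw [hadj_norm]
    have hco : τ * ‖B u‖ ^ 2 ≤ ‖A u‖ ^ 2 := by
      rcases eq_or_ne (A u) 0 with h0 | h0
      · have : B u = 0 := by simp [hB, h0]
        simp [this, h0]
      · have hApos : 0 < ‖A‖ := by
          by_contra h
          push_neg at h
          have : ‖A‖ = 0 := le_antisymm h (norm_nonneg _)
          have : A = 0 := norm_eq_zero.mp this
          simp [this] at h0
        have hBn : ‖B‖ = ‖A‖ * ‖A‖ := ContinuousLinearMap.norm_adjoint_comp_self A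
        have hBpos : 0 < ‖B‖ := by rw [hBn]; positivity
        have hτL : τ * ‖B‖ ≤ 1 := by
          rw [div_eq_inv_mul, mul_one] at hτ
          calc τ * ‖B‖ ≤ ‖B‖⁻¹ * ‖B‖ := by nlinarith
            _ = 1 := inv_mul_cancel₀ (ne_of_gt hBpos)
        calc τ * ‖B u‖ ^ 2 ≤ τ * (‖A‖ * ‖A u‖) ^ 2 := by
              have h2 := pow_le_pow_left₀ (norm_nonneg (B u)) hBu 2
              exact mul_le_mul_of_nonneg_left h2 hτ₀.le
          _ = (τ * (‖A‖ * ‖A‖)) * ‖A u‖ ^ 2 := by ring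
          _ ≤ 1 * ‖A u‖ ^ 2 := by
              have hone : τ * (‖A‖ * ‖A‖) ≤ 1 := by rw [← hBn]; exact hτL
              exact mul_le_mul_of_nonneg_right hone (sq_nonneg _)
          _ = ‖A u‖ ^ 2 := one_mul _
    -- expand the square
    have hexp : ‖u - (2 * τ) • (B u)‖ ^ 2
        = ‖u‖ ^ 2 - 4 * τ * ‖A u‖ ^ 2 + 4 * τ ^ 2 * ‖B u‖ ^ 2 := by
      rw [norm_sub_sq_real, real_inner_smul_right, hinner, norm_smul]
      rw [Real.norm_eq_abs, abs_of_pos (by positivity : (0:ℝ) < 2 * τ)]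
      ring
    have h2 : ‖u - (2 * τ) • (B u)‖ ^ 2 ≤ ‖u‖ ^ 2 := by
      rw [hexp]
      nlinarith [hco, hτ₀.le]
    nlinarith [norm_nonneg (u - (2 * τ) • (B u)), norm_nonneg u]
  have hS₁ne : ∀ x z, ‖S₁ x - S₁ z‖ ≤ ‖x - z‖ := by
    intro x z
    rw [hdiff]
    exact hkey (x - z)
  -- G is the 1/2-average of S₁
  have hGavg : ∀ x, G x = x + (1/2 : ℝ) • (S₁ x - x) := by
    intro x
    rw [hG]
    simp only [hS₁]
    module
  have hGineq : ∀ x z,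
      ‖G x - G z‖ ^ 2 + ((1 - (1/2 : ℝ)) / (1/2 : ℝ)) * ‖(x - G x) - (z - G z)‖ ^ 2
        ≤ ‖x - z‖ ^ 2 :=
    avg_ineq S₁ hS₁ne (1/2) (by norm_num) (by norm_num) G hGavg
  -- Dδ is the (δ²)⁻¹-average of D
  have hDne : ∀ x z, ‖D x - D z‖ ≤ ‖x - z‖ := by
    intro x z
    have := hD.dist_le_mul x z
    rwa [NNReal.coe_one, one_mul, dist_eq_norm, dist_eq_norm] at this
  have hα0 : (0 : ℝ) < (δ ^ 2)⁻¹ := by positivity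
  have hα1 : (δ ^ 2)⁻¹ < 1 := by
    rw [inv_lt_one_iff₀]; right; exact hδ
  have hDδineq : ∀ x z,
      ‖Dδ x - Dδ z‖ ^ 2 + ((1 - (δ ^ 2)⁻¹) / (δ ^ 2)⁻¹) * ‖(x - Dδ x) - (z - Dδ z)‖ ^ 2
        ≤ ‖x - z‖ ^ 2 :=
    avg_ineq D hDne ((δ ^ 2)⁻¹) hα0 hα1 Dδ hDδ
  -- compose
  set cG : ℝ := ((1 - (1/2 : ℝ)) / (1/2 : ℝ)) with hcG
  set cD : ℝ := ((1 - (δ ^ 2)⁻¹) / (δ ^ 2)⁻¹) with hcD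
  have hcGpos : 0 < cG := by norm_num [hcG]
  have hcDpos : 0 < cD := by
    rw [hcD]
    apply div_pos (by linarith) hα0
  have hTineq : ∀ x z,
      ‖Tδ x - Tδ z‖ ^ 2 + (min cG cD / 2) * ‖(x - Tδ x) - (z - Tδ z)‖ ^ 2 ≤ ‖x - z‖ ^ 2 := by
    intro x z
    rw [hT]
    exact comp_ineq G Dδ cG cD hcGpos hcDpos hGineq hDδineq x z
  obtain ⟨p0, hp0⟩ := hfix
  exact km_conv Tδ (min cG cD / 2) (by positivity) hTineq p0 hp0 x₀
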